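/- Let g = 6, let e_1, …, e_{14} ∈ ℂ, let f(x) = ∏_{m=1}^{14}(x − e_m) = ∑_{k=0}^{14} λ_k x^k with Kleinian 2-polar F(x,z), and for each 7-element subset S of {1,…,14} let Λ^{[S]} be the unique symmetric 6×6 matrix with P_S(x)P_{S^c}(z) + P_S(z)P_{S^c}(x) − F(x,z) = (x−z)² ∑_{i,j=1}^{6} Λ^{[S]}_{ij} x^{i−1} z^{j−1}. Then (1/2) ∑_S Λ^{[S]} = [[792λ_2, 330λ_3, 120λ_4, 36λ_5, 8λ_6, λ_7], [330λ_3, 1080λ_4, 492λ_5, 184λ_6, 51λ_7, 8λ_8], [120λ_4, 492λ_5, 1200λ_6, 542λ_7, 184λ_8, 36λ_9], [36λ_5, 184λ_6, 542λ_7, 1200λ_8, 492λ_9, 120λ_{10}], [8λ_6, 51λ_7, 184λ_8, 492λ_9, 1080λ_{10}, 330λ_{11}], [λ_7, 8λ_8, 36λ_9, 120λ_{10}, 330λ_{11}, 792λ_{12}]], the sum running over all 7-element subsets S (equivalently, over the N_6 = 1716 unordered partitions {S, S^c}). -/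

import Mathlib

open Finset

set_option maxHeartbeats 2000000


open Finset


lemma polysum_fin_zero {n : ℕ} (g : Fin n → ℂ)
    (h : (∑ b : Fin n, Polynomial.C (g b) * Polynomial.X ^ (b : ℕ)) = 0) :
    ∀ b, g b = 0 := by
  intro b
  have h2 := congrArg (fun q => Polynomial.coeff q (b : ℕ)) h
  simp only [Polynomial.finset_sum_coeff, Polynomial.coeff_C_mul, Polynomial.coeff_X_pow,
    Polynomial.coeff_zero, mul_ite, mul_one, mul_zero] at h2
  rwa [Finset.sum_eq_single b (fun c _ hc => by
      rw [if_neg (fun hh => hc (Fin.val_injective hh.symm))])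
    (fun hb => absurd (Finset.mem_univ b) hb), if_pos rfl] at h2

lemma fin_poly_zero {n : ℕ} (g : Fin n → ℂ)
    (h : ∀ x : ℂ, ∑ a : Fin n, g a * x ^ (a : ℕ) = 0) : ∀ a, g a = 0 :=
  polysum_fin_zero g (Polynomial.funext fun x => by
    simpa [Polynomial.eval_finset_sum] using h x)

lemma vanish2 (c : Fin 6 → Fin 6 → ℂ)
    (h : ∀ x z : ℂ, (x - z) ^ 2 * ∑ a : Fin 6, ∑ b : Fin 6,
        c a b * x ^ (a : ℕ) * z ^ (b : ℕ) = 0) :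
    ∀ a b, c a b = 0 := by
  have h1 : ∀ x : ℂ, ∀ b : Fin 6, ∑ a : Fin 6, c a b * x ^ (a : ℕ) = 0 := by
    intro x
    apply polysum_fin_zero (fun b => ∑ a : Fin 6, c a b * x ^ (a : ℕ))
    have hz : ∀ z : ℂ, Polynomial.eval z ((Polynomial.C x - Polynomial.X) ^ 2 *
        ∑ b : Fin 6, Polynomial.C (∑ a : Fin 6, c a b * x ^ (a : ℕ)) * Polynomial.X ^ (b : ℕ))
        = Polynomial.eval z 0 := by
      intro z
      have hxz := h x z
      rw [show (∑ a : Fin 6, ∑ b : Fin 6, c a b * x ^ (a : ℕ) * z ^ (b : ℕ))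
          = ∑ b : Fin 6, (∑ a : Fin 6, c a b * x ^ (a : ℕ)) * z ^ (b : ℕ) from by
        rw [Finset.sum_comm]; simp [Finset.sum_mul]] at hxz
      simpa [Polynomial.eval_finset_sum] using hxz
    have h0 := Polynomial.funext hz
    have hne : ((Polynomial.C x - Polynomial.X : Polynomial ℂ)) ^ 2 ≠ 0 := by
      apply pow_ne_zero
      intro hh
      exact Polynomial.X_sub_C_ne_zero x (by linear_combination -hh)
    exact (mul_eq_zero.mp h0).resolve_left hne
  intro a b
  exact fin_poly_zero (fun a => c a b) (fun x => h1 x b) a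

lemma lam14_eq (e : Fin 14 → ℂ) (lam : ℕ → ℂ)
    (hlam : ∀ x : ℂ, ∏ m, (x - e m) = ∑ k ∈ Finset.range 15, lam k * x ^ k) :
    lam 14 = 1 := by
  have hpq : (∏ m : Fin 14, (Polynomial.X - Polynomial.C (e m)))
      = ∑ k ∈ Finset.range 15, Polynomial.C (lam k) * Polynomial.X ^ k :=
    Polynomial.funext fun x => by
      simpa [Polynomial.eval_prod, Polynomial.eval_finset_sum] using hlam x
  have hm : (∏ m : Fin 14, (Polynomial.X - Polynomial.C (e m))).Monic :=
    Polynomial.monic_prod_of_monic _ _ fun m _ => Polynomial.monic_X_sub_C (e m)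
  have hdeg : (∏ m : Fin 14, (Polynomial.X - Polynomial.C (e m))).natDegree = 14 := by
    rw [Polynomial.natDegree_prod _ _ fun m _ => Polynomial.X_sub_C_ne_zero (e m)]
    simp [Polynomial.natDegree_X_sub_C]
  have h1 := hm.coeff_natDegree
  rw [hdeg, hpq] at h1
  have h2 : (∑ k ∈ Finset.range 15, Polynomial.C (lam k) * Polynomial.X ^ k).coeff 14 = lam 14 := by
    simp only [Polynomial.finset_sum_coeff, Polynomial.coeff_C_mul, Polynomial.coeff_X_pow,
      mul_ite, mul_one, mul_zero]
    rw [Finset.sum_eq_single 14 (fun c _ hc => by rw [if_neg (fun hh => hc hh.symm)]) (by intro hh; simp at hh),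
      if_pos rfl]
  rw [h2] at h1
  exact h1


noncomputable def Hj (e : Fin 14 → ℂ) (j : ℕ) (x z : ℂ) : ℂ :=
  ∑ S ∈ Finset.powersetCard j (Finset.univ : Finset (Fin 14)),
    (∏ i ∈ S, (x - e i)) * (∏ i ∈ Sᶜ, (z - e i))

lemma key_id (e : Fin 14 → ℂ) (lam : ℕ → ℂ)
    (hlam : ∀ x : ℂ, ∏ m, (x - e m) = ∑ k ∈ Finset.range 15, lam k * x ^ k)
    (hl14 : lam 14 = 1) (t x z : ℂ) :
    ∑ j ∈ Finset.range 15, t ^ j * Hj e j x z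
      = ∑ k ∈ Finset.range 15, lam k * (t * x + z) ^ k * (t + 1) ^ (14 - k) := by
  -- Step 1: LHS as sum over powerset
  have step1 : ∑ j ∈ Finset.range 15, t ^ j * Hj e j x z
      = ∑ S ∈ (Finset.univ : Finset (Fin 14)).powerset,
          (∏ i ∈ S, (t * (x - e i))) * (∏ i ∈ Sᶜ, (z - e i)) := by
    rw [Finset.powerset_card_disjiUnion]
    erw [Finset.sum_disjiUnion]
    rw [show Finset.card (Finset.univ : Finset (Fin 14)) + 1 = 15 by simp]
    refine Finset.sum_congr rfl fun j hj => ?_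
    rw [Hj, Finset.mul_sum]
    refine Finset.sum_congr rfl fun S hS => ?_
    have hcard : S.card = j := (Finset.mem_powersetCard.mp hS).2
    rw [Finset.prod_mul_distrib, Finset.prod_const, hcard]
    ring
  -- Step 2: prod_add
  have step2 : ∑ S ∈ (Finset.univ : Finset (Fin 14)).powerset,
      (∏ i ∈ S, (t * (x - e i))) * (∏ i ∈ Sᶜ, (z - e i))
      = ∏ m : Fin 14, (t * (x - e m) + (z - e m)) := by
    rw [Finset.prod_add]
    refine Finset.sum_congr rfl fun S hS => ?_
    rw [Finset.compl_eq_univ_sdiff]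
  have step3 : ∏ m : Fin 14, (t * (x - e m) + (z - e m))
      = ∏ m : Fin 14, ((t * x + z) - (t + 1) * e m) :=
    Finset.prod_congr rfl fun m _ => by ring
  rw [step1, step2, step3]
  -- Step 4
  rcases eq_or_ne (t + 1) 0 with h0 | h0
  · have hL : ∏ m : Fin 14, ((t * x + z) - (t + 1) * e m) = (t * x + z) ^ 14 := by
      rw [Finset.prod_congr rfl fun (m : Fin 14) _ => by rw [h0, zero_mul, sub_zero],
        Finset.prod_const]
      simp
    rw [hL, Finset.sum_range_succ, h0]
    rw [Finset.sum_eq_zero fun k hk => by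
      have hk14 := Finset.mem_range.mp hk
      rw [zero_pow (by omega : 14 - k ≠ 0)]; ring, hl14]
    ring
  · set u : ℂ := (t * x + z) / (t + 1) with hu
    have hxu : t * x + z = (t + 1) * u := by
      rw [hu]; field_simp
    calc ∏ m : Fin 14, ((t * x + z) - (t + 1) * e m)
        = ∏ m : Fin 14, ((t + 1) * (u - e m)) :=
          Finset.prod_congr rfl fun m _ => by rw [hxu]; ring
      _ = (t + 1) ^ 14 * ∏ m : Fin 14, (u - e m) := by
          rw [Finset.prod_mul_distrib, Finset.prod_const]; simp
      _ = (t + 1) ^ 14 * ∑ k ∈ Finset.range 15, lam k * u ^ k := by rw [hlam u]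
      _ = ∑ k ∈ Finset.range 15, lam k * (t * x + z) ^ k * (t + 1) ^ (14 - k) := by
          rw [Finset.mul_sum]
          refine Finset.sum_congr rfl fun k hk => ?_
          have hk15 : k ≤ 14 := by
            have := Finset.mem_range.mp hk; omega
          rw [hxu, mul_pow, show (t + 1) ^ 14 = (t + 1) ^ k * (t + 1) ^ (14 - k) from by
            rw [← pow_add]; congr 1; omega]
          ring

noncomputable def R7 (lam : ℕ → ℂ) (x z : ℂ) : ℂ :=
    lam 0 * (3432 * x ^ 0 * z ^ 0)
    + lam 1 * (1716 * x ^ 0 * z ^ 1 + 1716 * x ^ 1 * z ^ 0)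
    + lam 2 * (792 * x ^ 0 * z ^ 2 + 1848 * x ^ 1 * z ^ 1 + 792 * x ^ 2 * z ^ 0)
    + lam 3 * (330 * x ^ 0 * z ^ 3 + 1386 * x ^ 1 * z ^ 2 + 1386 * x ^ 2 * z ^ 1 + 330 * x ^ 3 * z ^ 0)
    + lam 4 * (120 * x ^ 0 * z ^ 4 + 840 * x ^ 1 * z ^ 3 + 1512 * x ^ 2 * z ^ 2 + 840 * x ^ 3 * z ^ 1 + 120 * x ^ 4 * z ^ 0)
    + lam 5 * (36 * x ^ 0 * z ^ 5 + 420 * x ^ 1 * z ^ 4 + 1260 * x ^ 2 * z ^ 3 + 1260 * x ^ 3 * z ^ 2 + 420 * x ^ 4 * z ^ 1 + 36 * x ^ 5 * z ^ 0)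
    + lam 6 * (8 * x ^ 0 * z ^ 6 + 168 * x ^ 1 * z ^ 5 + 840 * x ^ 2 * z ^ 4 + 1400 * x ^ 3 * z ^ 3 + 840 * x ^ 4 * z ^ 2 + 168 * x ^ 5 * z ^ 1 + 8 * x ^ 6 * z ^ 0)
    + lam 7 * (1 * x ^ 0 * z ^ 7 + 49 * x ^ 1 * z ^ 6 + 441 * x ^ 2 * z ^ 5 + 1225 * x ^ 3 * z ^ 4 + 1225 * x ^ 4 * z ^ 3 + 441 * x ^ 5 * z ^ 2 + 49 * x ^ 6 * z ^ 1 + 1 * x ^ 7 * z ^ 0)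
    + lam 8 * (8 * x ^ 1 * z ^ 7 + 168 * x ^ 2 * z ^ 6 + 840 * x ^ 3 * z ^ 5 + 1400 * x ^ 4 * z ^ 4 + 840 * x ^ 5 * z ^ 3 + 168 * x ^ 6 * z ^ 2 + 8 * x ^ 7 * z ^ 1)
    + lam 9 * (36 * x ^ 2 * z ^ 7 + 420 * x ^ 3 * z ^ 6 + 1260 * x ^ 4 * z ^ 5 + 1260 * x ^ 5 * z ^ 4 + 420 * x ^ 6 * z ^ 3 + 36 * x ^ 7 * z ^ 2)
    + lam 10 * (120 * x ^ 3 * z ^ 7 + 840 * x ^ 4 * z ^ 6 + 1512 * x ^ 5 * z ^ 5 + 840 * x ^ 6 * z ^ 4 + 120 * x ^ 7 * z ^ 3)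
    + lam 11 * (330 * x ^ 4 * z ^ 7 + 1386 * x ^ 5 * z ^ 6 + 1386 * x ^ 6 * z ^ 5 + 330 * x ^ 7 * z ^ 4)
    + lam 12 * (792 * x ^ 5 * z ^ 7 + 1848 * x ^ 6 * z ^ 6 + 792 * x ^ 7 * z ^ 5)
    + lam 13 * (1716 * x ^ 6 * z ^ 7 + 1716 * x ^ 7 * z ^ 6)
    + lam 14 * (3432 * x ^ 7 * z ^ 7)

lemma coeff7 (e : Fin 14 → ℂ) (lam : ℕ → ℂ)
    (hkey : ∀ t x z : ℂ, ∑ j ∈ Finset.range 15, t ^ j * Hj e j x z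
      = ∑ k ∈ Finset.range 15, lam k * (t * x + z) ^ k * (t + 1) ^ (14 - k))
    (x z : ℂ) : Hj e 7 x z = R7 lam x z := by
  have k0 := hkey 0 x z
  have k1 := hkey 1 x z
  have k2 := hkey 2 x z
  have k3 := hkey 3 x z
  have k4 := hkey 4 x z
  have k5 := hkey 5 x z
  have k6 := hkey 6 x z
  have k7 := hkey 7 x z
  have k8 := hkey 8 x z
  have k9 := hkey 9 x z
  have k10 := hkey 10 x z
  have k11 := hkey 11 x z
  have k12 := hkey 12 x z
  have k13 := hkey 13 x z
  have k14 := hkey 14 x z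
  simp only [Finset.sum_range_succ, Finset.sum_range_zero, Nat.reduceSub] at k0 k1 k2 k3 k4 k5 k6 k7 k8 k9 k10 k11 k12 k13 k14
  rw [R7]
  linear_combination (-35717/1161216 : ℂ) * k0 + (2052223/5443200 : ℂ) * k1 + (-188547391/87091200 : ℂ) * k2 + (7000961/907200 : ℂ) * k3 + (-1660799683/87091200 : ℂ) * k4 + (7519921/217728 : ℂ) * k5 + (-16934937/358400 : ℂ) * k6 + (22486511/453600 : ℂ) * k7 + (-1162759319/29030400 : ℂ) * k8 + (44971307/1814400 : ℂ) * k9 + (-40262725/3483648 : ℂ) * k10 + (10712339/2721600 : ℂ) * k11 + (-26854507/29030400 : ℂ) * k12 + (730711/5443200 : ℂ) * k13 + (-112879/12441600 : ℂ) * k14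


/-- genus 6, the matrix `Λ_6` of Example 6.5 of the paper, with the corrected
entry `792λ_2`: summing the partition matrices `Λ^{[S]}` over all 7-element subsets `S` of
the fourteen branch indices (twice the `N_6 = 1716` unordered partitions) and halving gives
the stated matrix `Λ_6`. -/
theorem genus_six_residual_matrix_sum
    (e : Fin 14 → ℂ)
    (lam : ℕ → ℂ)
    (hlam : ∀ x : ℂ, ∏ m, (x - e m) = ∑ k ∈ Finset.range 15, lam k * x ^ k)
    (F : ℂ → ℂ → ℂ)
    (hF : ∀ x z : ℂ, F x z = 2 * lam 14 * x ^ 7 * z ^ 7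
        + ∑ k ∈ Finset.range 7,
            x ^ k * z ^ k * (2 * lam (2 * k) + (x + z) * lam (2 * k + 1)))
    (L : Finset (Fin 14) → Matrix (Fin 6) (Fin 6) ℂ)
    (hLsymm : ∀ S ∈ Finset.powersetCard 7 (Finset.univ : Finset (Fin 14)), (L S).IsSymm)
    (hL : ∀ S ∈ Finset.powersetCard 7 (Finset.univ : Finset (Fin 14)), ∀ x z : ℂ,
        (∏ i ∈ S, (x - e i)) * (∏ j ∈ Sᶜ, (z - e j))
          + (∏ i ∈ S, (z - e i)) * (∏ j ∈ Sᶜ, (x - e j)) - F x z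
        = (x - z) ^ 2 * ∑ a, ∑ b, L S a b * x ^ (a : ℕ) * z ^ (b : ℕ)) :
    (1 / 2 : ℂ) • ∑ S ∈ Finset.powersetCard 7 (Finset.univ : Finset (Fin 14)), L S
      = !![792 * lam 2, 330 * lam 3, 120 * lam 4, 36 * lam 5, 8 * lam 6, lam 7;
           330 * lam 3, 1080 * lam 4, 492 * lam 5, 184 * lam 6, 51 * lam 7, 8 * lam 8;
           120 * lam 4, 492 * lam 5, 1200 * lam 6, 542 * lam 7, 184 * lam 8, 36 * lam 9;
           36 * lam 5, 184 * lam 6, 542 * lam 7, 1200 * lam 8, 492 * lam 9, 120 * lam 10;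
           8 * lam 6, 51 * lam 7, 184 * lam 8, 492 * lam 9, 1080 * lam 10, 330 * lam 11;
           lam 7, 8 * lam 8, 36 * lam 9, 120 * lam 10, 330 * lam 11, 792 * lam 12] := by
  have hl14 : lam 14 = 1 := lam14_eq e lam hlam
  have hc7 := coeff7 e lam (key_id e lam hlam hl14)
  set P7 := Finset.powersetCard 7 (Finset.univ : Finset (Fin 14)) with hP7
  set T : Matrix (Fin 6) (Fin 6) ℂ :=
      !![792 * lam 2, 330 * lam 3, 120 * lam 4, 36 * lam 5, 8 * lam 6, lam 7;
           330 * lam 3, 1080 * lam 4, 492 * lam 5, 184 * lam 6, 51 * lam 7, 8 * lam 8;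
           120 * lam 4, 492 * lam 5, 1200 * lam 6, 542 * lam 7, 184 * lam 8, 36 * lam 9;
           36 * lam 5, 184 * lam 6, 542 * lam 7, 1200 * lam 8, 492 * lam 9, 120 * lam 10;
           8 * lam 6, 51 * lam 7, 184 * lam 8, 492 * lam 9, 1080 * lam 10, 330 * lam 11;
           lam 7, 8 * lam 8, 36 * lam 9, 120 * lam 10, 330 * lam 11, 792 * lam 12] with hT
  have hcard : P7.card = 3432 := by
    rw [hP7, Finset.card_powersetCard, Finset.card_univ, Fintype.card_fin]; decide
  have A : ∀ x z : ℂ, Hj e 7 x z + Hj e 7 z x - 3432 * F x z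
      = (x - z) ^ 2 * ∑ a : Fin 6, ∑ b : Fin 6,
          (∑ S ∈ P7, L S a b) * x ^ (a : ℕ) * z ^ (b : ℕ) := by
    intro x z
    have hLsum : ∑ S ∈ P7, ((∏ i ∈ S, (x - e i)) * (∏ j ∈ Sᶜ, (z - e j))
          + (∏ i ∈ S, (z - e i)) * (∏ j ∈ Sᶜ, (x - e j)) - F x z)
        = ∑ S ∈ P7, (x - z) ^ 2 * ∑ a : Fin 6, ∑ b : Fin 6,
            L S a b * x ^ (a : ℕ) * z ^ (b : ℕ) :=
      Finset.sum_congr rfl fun S hS => hL S hS x z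
    rw [Finset.sum_sub_distrib, Finset.sum_add_distrib, Finset.sum_const, hcard,
      nsmul_eq_mul, ← Finset.mul_sum] at hLsum
    push_cast at hLsum
    have e1 : ∑ S ∈ P7, (∏ i ∈ S, (x - e i)) * ∏ j ∈ Sᶜ, (z - e j) = Hj e 7 x z := rfl
    have e2 : ∑ S ∈ P7, (∏ i ∈ S, (z - e i)) * ∏ j ∈ Sᶜ, (x - e j) = Hj e 7 z x := rfl
    rw [e1, e2] at hLsum
    rw [hLsum]
    congr 1
    calc ∑ S ∈ P7, ∑ a : Fin 6, ∑ b : Fin 6, L S a b * x ^ (a : ℕ) * z ^ (b : ℕ)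
        = ∑ a : Fin 6, ∑ S ∈ P7, ∑ b : Fin 6, L S a b * x ^ (a : ℕ) * z ^ (b : ℕ) :=
          Finset.sum_comm
      _ = ∑ a : Fin 6, ∑ b : Fin 6, ∑ S ∈ P7, L S a b * x ^ (a : ℕ) * z ^ (b : ℕ) :=
          Finset.sum_congr rfl fun a _ => Finset.sum_comm
      _ = ∑ a : Fin 6, ∑ b : Fin 6, (∑ S ∈ P7, L S a b) * x ^ (a : ℕ) * z ^ (b : ℕ) := by
          simp only [Finset.sum_mul]
  have B : ∀ x z : ℂ, Hj e 7 x z + Hj e 7 z x = 3432 * F x z + (x - z) ^ 2 *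
      (2 * (792 * lam 2) * x ^ 0 * z ^ 0
        + 2 * (330 * lam 3) * x ^ 0 * z ^ 1
        + 2 * (120 * lam 4) * x ^ 0 * z ^ 2
        + 2 * (36 * lam 5) * x ^ 0 * z ^ 3
        + 2 * (8 * lam 6) * x ^ 0 * z ^ 4
        + 2 * (1 * lam 7) * x ^ 0 * z ^ 5
        + 2 * (330 * lam 3) * x ^ 1 * z ^ 0
        + 2 * (1080 * lam 4) * x ^ 1 * z ^ 1
        + 2 * (492 * lam 5) * x ^ 1 * z ^ 2
        + 2 * (184 * lam 6) * x ^ 1 * z ^ 3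
        + 2 * (51 * lam 7) * x ^ 1 * z ^ 4
        + 2 * (8 * lam 8) * x ^ 1 * z ^ 5
        + 2 * (120 * lam 4) * x ^ 2 * z ^ 0
        + 2 * (492 * lam 5) * x ^ 2 * z ^ 1
        + 2 * (1200 * lam 6) * x ^ 2 * z ^ 2
        + 2 * (542 * lam 7) * x ^ 2 * z ^ 3
        + 2 * (184 * lam 8) * x ^ 2 * z ^ 4
        + 2 * (36 * lam 9) * x ^ 2 * z ^ 5
        + 2 * (36 * lam 5) * x ^ 3 * z ^ 0
        + 2 * (184 * lam 6) * x ^ 3 * z ^ 1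
        + 2 * (542 * lam 7) * x ^ 3 * z ^ 2
        + 2 * (1200 * lam 8) * x ^ 3 * z ^ 3
        + 2 * (492 * lam 9) * x ^ 3 * z ^ 4
        + 2 * (120 * lam 10) * x ^ 3 * z ^ 5
        + 2 * (8 * lam 6) * x ^ 4 * z ^ 0
        + 2 * (51 * lam 7) * x ^ 4 * z ^ 1
        + 2 * (184 * lam 8) * x ^ 4 * z ^ 2
        + 2 * (492 * lam 9) * x ^ 4 * z ^ 3
        + 2 * (1080 * lam 10) * x ^ 4 * z ^ 4
        + 2 * (330 * lam 11) * x ^ 4 * z ^ 5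
        + 2 * (1 * lam 7) * x ^ 5 * z ^ 0
        + 2 * (8 * lam 8) * x ^ 5 * z ^ 1
        + 2 * (36 * lam 9) * x ^ 5 * z ^ 2
        + 2 * (120 * lam 10) * x ^ 5 * z ^ 3
        + 2 * (330 * lam 11) * x ^ 5 * z ^ 4
        + 2 * (792 * lam 12) * x ^ 5 * z ^ 5) := by
    intro x z
    rw [hc7 x z, hc7 z x, hF]
    simp only [R7, Finset.sum_range_succ, Finset.sum_range_zero, Nat.reduceMul, Nat.reduceAdd]
    ring
  have hvan : ∀ a b : Fin 6, ((∑ S ∈ P7, L S a b) - 2 * T a b) = 0 := by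
    apply vanish2 (fun a b => (∑ S ∈ P7, L S a b) - 2 * T a b)
    intro x z
    have hA := A x z
    have hB := B x z
    simp only [Fin.sum_univ_six, Fin.val_zero, Fin.val_one,
      show ((2 : Fin 6) : ℕ) = 2 from rfl, show ((3 : Fin 6) : ℕ) = 3 from rfl,
      show ((4 : Fin 6) : ℕ) = 4 from rfl, show ((5 : Fin 6) : ℕ) = 5 from rfl] at hA ⊢
    rw [hT]
    simp only [Matrix.of_apply, Matrix.cons_val', Matrix.cons_val_zero, Matrix.cons_val_one,
      Matrix.head_cons, Matrix.empty_val', Matrix.cons_val_fin_one, Matrix.head_fin_const,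
      show (1 : Fin 6) = Fin.succ 0 from rfl, show (2 : Fin 6) = Fin.succ 1 from rfl,
      show (3 : Fin 6) = Fin.succ 2 from rfl, show (4 : Fin 6) = Fin.succ 3 from rfl,
      show (5 : Fin 6) = Fin.succ 4 from rfl,
      show (1 : Fin 5) = Fin.succ 0 from rfl, show (2 : Fin 5) = Fin.succ 1 from rfl,
      show (3 : Fin 5) = Fin.succ 2 from rfl, show (4 : Fin 5) = Fin.succ 3 from rfl,
      show (1 : Fin 4) = Fin.succ 0 from rfl, show (2 : Fin 4) = Fin.succ 1 from rfl,
      show (3 : Fin 4) = Fin.succ 2 from rfl,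
      show (1 : Fin 3) = Fin.succ 0 from rfl, show (2 : Fin 3) = Fin.succ 1 from rfl,
      show (1 : Fin 2) = Fin.succ 0 from rfl,
      Matrix.cons_val_succ] at hA ⊢
    linear_combination hB - hA
  have hM : ∀ a b : Fin 6, (∑ S ∈ P7, L S) a b = 2 * T a b := by
    intro a b
    have h2 : (∑ S ∈ P7, L S) a b = ∑ S ∈ P7, L S a b := Matrix.sum_apply a b P7 L
    rw [h2]
    exact sub_eq_zero.mp (hvan a b)
  ext a b
  rw [Matrix.smul_apply, hM a b, smul_eq_mul]
  ring
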